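/- arXiv:math/0001136 — 2 statements merged into one kernel-verified Lean document; each statement's English description precedes it below -/
import Mathlib

section
/- Let R be a commutative ring, A a bialgebra over R with comultiplication Δ and counit ε, and let F be a Drinfeld twist for A. Then there is a bialgebra structure on A whose underlying R-algebra structure is the original one, whose comultiplication is the twisted comultiplication Δ_F(a) = F · Δ(a) · F⁻¹, and whose counit is ε. -/
open TensorProduct

noncomputable section

variable {R A : Type*} [CommRing R] [Ring A] [Algebra R A]

/-- The embedding `A ⊗ A → A ⊗ (A ⊗ A)`, `x ⊗ y ↦ x ⊗ (y ⊗ 1)`, i.e. `F ↦ F₁₂`. -/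
def emb12 : A ⊗[R] A →ₗ[R] A ⊗[R] (A ⊗[R] A) :=
  TensorProduct.map LinearMap.id ((TensorProduct.mk R A A).flip 1)

/-- The embedding `A ⊗ A → A ⊗ (A ⊗ A)`, `x ↦ 1 ⊗ x`, i.e. `F ↦ F₂₃`. -/
def emb23 : A ⊗[R] A →ₗ[R] A ⊗[R] (A ⊗[R] A) :=
  TensorProduct.mk R A (A ⊗[R] A) 1

/-- `D ⊗ id : A ⊗ A → A ⊗ (A ⊗ A)` (via the associator). -/
def tensorFst (D : A →ₗ[R] A ⊗[R] A) : A ⊗[R] A →ₗ[R] A ⊗[R] (A ⊗[R] A) :=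
  (TensorProduct.assoc R A A A).toLinearMap ∘ₗ TensorProduct.map D LinearMap.id

/-- `id ⊗ D : A ⊗ A → A ⊗ (A ⊗ A)`. -/
def tensorSnd (D : A →ₗ[R] A ⊗[R] A) : A ⊗[R] A →ₗ[R] A ⊗[R] (A ⊗[R] A) :=
  TensorProduct.map LinearMap.id D

/-- `e ⊗ id : A ⊗ A → A` (via `R ⊗ A ≅ A`). -/
def counitFst (e : A →ₗ[R] R) : A ⊗[R] A →ₗ[R] A :=
  (TensorProduct.lid R A).toLinearMap ∘ₗ TensorProduct.map e LinearMap.id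

/-- `id ⊗ e : A ⊗ A → A` (via `A ⊗ R ≅ A`). -/
def counitSnd (e : A →ₗ[R] R) : A ⊗[R] A →ₗ[R] A :=
  (TensorProduct.rid R A).toLinearMap ∘ₗ TensorProduct.map LinearMap.id e

/-- The comultiplication `D` twisted by `F`: `a ↦ F * D a * F⁻¹`. -/
def twistMap (F Finv : A ⊗[R] A) (D : A →ₗ[R] A ⊗[R] A) : A →ₗ[R] A ⊗[R] A :=
  LinearMap.mulRight R Finv ∘ₗ LinearMap.mulLeft R F ∘ₗ D

/-- `F` (with two-sided inverse `Finv`) is a Drinfeld twist with respect to the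
comultiplication `D` and the counit `e`: it is invertible, satisfies the cocycle equation
`F₁₂ · (D ⊗ id)(F) = F₂₃ · (id ⊗ D)(F)`, and the normalization
`(e ⊗ id)(F) = 1 = (id ⊗ e)(F)`. -/
def IsDrinfeldTwist (D : A →ₗ[R] A ⊗[R] A) (e : A →ₗ[R] R) (F Finv : A ⊗[R] A) : Prop :=
  F * Finv = 1 ∧ Finv * F = 1 ∧
    emb12 F * tensorFst D F = emb23 F * tensorSnd D F ∧
    counitFst e F = 1 ∧ counitSnd e F = 1


/-! ### Auxiliary lemmas -/

lemma twistMap_apply (F Finv : A ⊗[R] A) (D : A →ₗ[R] A ⊗[R] A) (a : A) :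
    twistMap F Finv D a = F * D a * Finv := rfl

lemma emb12_eq_assoc (z : A ⊗[R] A) :
    emb12 (R := R) z = TensorProduct.assoc R A A A (z ⊗ₜ 1) := by
  have : emb12 (R := R) (A := A)
      = (TensorProduct.assoc R A A A).toLinearMap
        ∘ₗ ((TensorProduct.mk R (A ⊗[R] A) A).flip 1) := by
    ext x y; rfl
  rw [this]; rfl

lemma assoc_mul (x y : (A ⊗[R] A) ⊗[R] A) : TensorProduct.assoc R A A A (x * y)
    = TensorProduct.assoc R A A A x * TensorProduct.assoc R A A A y :=
  map_mul (Algebra.TensorProduct.assoc R R R A A A) x y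

lemma tensorFst_twist (F Finv : A ⊗[R] A) (D : A →ₗ[R] A ⊗[R] A) (x : A ⊗[R] A) :
    tensorFst (twistMap F Finv D) x = emb12 F * tensorFst D x * emb12 Finv := by
  have h : tensorFst (twistMap F Finv D) =
      LinearMap.mulRight R (emb12 (R := R) Finv) ∘ₗ LinearMap.mulLeft R (emb12 (R := R) F)
        ∘ₗ tensorFst D := by
    ext a b
    show TensorProduct.assoc R A A A ((F * D a * Finv) ⊗ₜ b)
      = emb12 F * TensorProduct.assoc R A A A ((D a) ⊗ₜ b) * emb12 Finv
    have : (F * D a * Finv) ⊗ₜ[R] b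
        = (F ⊗ₜ[R] (1 : A)) * ((D a) ⊗ₜ[R] b) * (Finv ⊗ₜ[R] (1 : A)) := by
      simp [Algebra.TensorProduct.tmul_mul_tmul]
    rw [this, assoc_mul, assoc_mul, ← emb12_eq_assoc, ← emb12_eq_assoc]
  rw [h]; rfl

lemma tensorSnd_twist (F Finv : A ⊗[R] A) (D : A →ₗ[R] A ⊗[R] A) (x : A ⊗[R] A) :
    tensorSnd (twistMap F Finv D) x = emb23 F * tensorSnd D x * emb23 Finv := by
  have h : tensorSnd (twistMap F Finv D) =
      LinearMap.mulRight R (emb23 (R := R) Finv) ∘ₗ LinearMap.mulLeft R (emb23 (R := R) F)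
        ∘ₗ tensorSnd D := by
    ext a b
    show a ⊗ₜ (F * D b * Finv) = emb23 F * (a ⊗ₜ (D b)) * emb23 Finv
    show a ⊗ₜ (F * D b * Finv) = ((1 : A) ⊗ₜ F) * (a ⊗ₜ (D b)) * ((1 : A) ⊗ₜ Finv)
    simp [Algebra.TensorProduct.tmul_mul_tmul]
  rw [h]; rfl

section BialgAux
variable {R A : Type*} [CommRing R] [Ring A] [inst : Bialgebra R A]

/-- `Δ ⊗ id` (via the associator), as an algebra hom. -/
def tFA : A ⊗[R] A →ₐ[R] A ⊗[R] (A ⊗[R] A) :=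
  (Algebra.TensorProduct.assoc R R R A A A).toAlgHom.comp
    (Algebra.TensorProduct.map (Bialgebra.comulAlgHom R A) (AlgHom.id R A))

lemma tFA_eq (x : A ⊗[R] A) : tensorFst (Coalgebra.comul (R := R)) x = tFA x := by
  have h : (tFA (R := R) (A := A)).toLinearMap = tensorFst (Coalgebra.comul) := by
    ext x y; rfl
  exact (LinearMap.congr_fun h x).symm

/-- `id ⊗ Δ`, as an algebra hom. -/
def tSA : A ⊗[R] A →ₐ[R] A ⊗[R] (A ⊗[R] A) :=
  Algebra.TensorProduct.map (AlgHom.id R A) (Bialgebra.comulAlgHom R A)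

lemma tSA_eq (x : A ⊗[R] A) : tensorSnd (Coalgebra.comul (R := R)) x = tSA x := by
  have h : (tSA (R := R) (A := A)).toLinearMap = tensorSnd (Coalgebra.comul) := by
    ext x y; rfl
  exact (LinearMap.congr_fun h x).symm

/-- `x ⊗ y ↦ x ⊗ (y ⊗ 1)`, as an algebra hom. -/
def e12A : A ⊗[R] A →ₐ[R] A ⊗[R] (A ⊗[R] A) :=
  Algebra.TensorProduct.map (AlgHom.id R A) Algebra.TensorProduct.includeLeft

lemma e12A_eq (x : A ⊗[R] A) : emb12 (R := R) x = e12A x := by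
  have h : (e12A (R := R) (A := A)).toLinearMap = emb12 := by ext x y; rfl
  exact (LinearMap.congr_fun h x).symm

/-- `x ↦ 1 ⊗ x`, as an algebra hom. -/
def e23A : A ⊗[R] A →ₐ[R] A ⊗[R] (A ⊗[R] A) := Algebra.TensorProduct.includeRight

lemma e23A_eq (x : A ⊗[R] A) : emb23 (R := R) x = e23A x := by
  have h : (e23A (R := R) (A := A)).toLinearMap = emb23 := by ext x y; rfl
  exact (LinearMap.congr_fun h x).symm

/-- `ε ⊗ id : A ⊗ A → R ⊗ A`, as an algebra hom. -/
def cFA : A ⊗[R] A →ₐ[R] R ⊗[R] A :=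
  Algebra.TensorProduct.map (Bialgebra.counitAlgHom R A) (AlgHom.id R A)

lemma cFA_eq (x : A ⊗[R] A) :
    LinearMap.rTensor A (Coalgebra.counit (R := R)) x = cFA (R := R) (A := A) x := by
  have h : (cFA (R := R) (A := A)).toLinearMap
      = LinearMap.rTensor A (Coalgebra.counit (R := R)) := by ext x y; rfl
  exact (LinearMap.congr_fun h x).symm

/-- `id ⊗ ε : A ⊗ A → A ⊗ R`, as an algebra hom. -/
def cSA : A ⊗[R] A →ₐ[R] A ⊗[R] R :=
  Algebra.TensorProduct.map (AlgHom.id R A) (Bialgebra.counitAlgHom R A)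

lemma cSA_eq (x : A ⊗[R] A) :
    LinearMap.lTensor A (Coalgebra.counit (R := R)) x = cSA (R := R) (A := A) x := by
  have h : (cSA (R := R) (A := A)).toLinearMap
      = LinearMap.lTensor A (Coalgebra.counit (R := R)) := by ext x y; rfl
  exact (LinearMap.congr_fun h x).symm

end BialgAux

set_option maxHeartbeats 2000000 in
/-- for a bialgebra `A` and a Drinfeld twist `F`, there is a bialgebra structure
on `A` whose underlying `R`-algebra structure is the original one, whose comultiplication is
the twisted comultiplication `Δ_F(a) = F · Δ(a) · F⁻¹`, and whose counit is `ε`.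
(The comultiplication and counit of the new structure are compared via `HEq` since their
types mention the module structure coming from the new bialgebra structure; all data on the
right-hand sides is taken with respect to the original instance `inst`.) -/
theorem twisted_bialgebra_exists {R A : Type*} [CommRing R] [Ring A] [inst : Bialgebra R A]
    (F Finv : A ⊗[R] A)
    (hF : IsDrinfeldTwist (Coalgebra.comul (R := R) (A := A)) (Coalgebra.counit (R := R) (A := A))
      F Finv) :
    ∃ B : Bialgebra R A,
      B.toAlgebra = inst.toAlgebra ∧
      HEq B.toCoalgebraStruct.comul
        (@twistMap R A _ _ inst.toAlgebra F Finv inst.toCoalgebraStruct.comul) ∧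
      HEq B.toCoalgebraStruct.counit inst.toCoalgebraStruct.counit := by
  obtain ⟨h1, h2, hcoc, hcF, hcS⟩ := hF
  set D : A →ₗ[R] A ⊗[R] A := Coalgebra.comul (R := R) with hD
  -- cocycle equation in AlgHom form
  have hL : e12A (R := R) F * tFA (R := R) F = e23A (R := R) F * tSA (R := R) F := by
    rw [← e12A_eq, ← tFA_eq, ← e23A_eq, ← tSA_eq]; exact hcoc
  -- the "inverse cocycle" elements agree
  have hX : tFA (R := R) Finv * e12A (R := R) Finv
      = tSA (R := R) Finv * e23A (R := R) Finv := by
    have hXL : (tFA (R := R) Finv * e12A Finv) * (e12A F * tFA F) = 1 := by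
      calc (tFA (R := R) Finv * e12A Finv) * (e12A F * tFA F)
          = tFA Finv * (e12A Finv * e12A F) * tFA F := by noncomm_ring
        _ = 1 := by rw [← map_mul, h2, map_one, mul_one, ← map_mul, h2, map_one]
    have hLY : (e23A (R := R) F * tSA F) * (tSA Finv * e23A Finv) = 1 := by
      calc (e23A (R := R) F * tSA F) * (tSA Finv * e23A Finv)
          = e23A F * (tSA F * tSA Finv) * e23A Finv := by noncomm_ring
        _ = 1 := by rw [← map_mul, h1, map_one, mul_one, ← map_mul, h1, map_one]
    calc tFA (R := R) Finv * e12A Finv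
        = (tFA Finv * e12A Finv) * ((e12A F * tFA F) * (tSA Finv * e23A Finv)) := by
          rw [hL, hLY, mul_one]
      _ = ((tFA Finv * e12A Finv) * (e12A F * tFA F)) * (tSA Finv * e23A Finv) := by
          simp only [mul_assoc]
      _ = tSA Finv * e23A Finv := by rw [hXL, one_mul]
  -- counit facts
  have hcFA_F : cFA (R := R) (A := A) F = 1 := by
    apply (Algebra.TensorProduct.lid R A).injective
    rw [map_one]
    exact hcF
  have hcFA_Finv : cFA (R := R) (A := A) Finv = 1 := by
    have := map_mul (cFA (R := R) (A := A)) F Finv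
    rw [h1, map_one, hcFA_F, one_mul] at this
    exact this.symm
  have hrid : ∀ x : A ⊗[R] R, Algebra.TensorProduct.rid R R A x = TensorProduct.rid R A x := by
    intro x
    rw [← TensorProduct.AlgebraTensorModule.rid_eq_rid]
    rfl
  have hcSA_F : cSA (R := R) (A := A) F = 1 := by
    apply (Algebra.TensorProduct.rid R R A).injective
    rw [map_one, hrid]
    exact hcS
  have hcSA_Finv : cSA (R := R) (A := A) Finv = 1 := by
    have := map_mul (cSA (R := R) (A := A)) F Finv
    rw [h1, map_one, hcSA_F, one_mul] at this
    exact this.symm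
  refine ⟨{ inst with
    comul := twistMap F Finv D
    coassoc := ?_
    rTensor_counit_comp_comul := ?_
    lTensor_counit_comp_comul := ?_
    comul_one := ?_
    mul_compr₂_comul := ?_ }, rfl, HEq.rfl, HEq.rfl⟩
  · -- coassociativity
    apply LinearMap.ext; intro a
    show tensorFst (twistMap F Finv D) (twistMap F Finv D a)
      = tensorSnd (twistMap F Finv D) (twistMap F Finv D a)
    rw [tensorFst_twist, tensorSnd_twist, twistMap_apply]
    rw [e12A_eq, e23A_eq, hD, tFA_eq, tSA_eq, map_mul, map_mul, map_mul, map_mul]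
    have hca : tFA (R := R) ((Coalgebra.comul (R := R)) a)
        = tSA (R := R) ((Coalgebra.comul (R := R)) a) := by
      rw [← tFA_eq, ← tSA_eq]
      exact LinearMap.congr_fun (Coalgebra.coassoc (R := R) (A := A)) a
    calc e12A (R := R) F * (tFA F * tFA ((Coalgebra.comul (R := R)) a) * tFA Finv) * e12A Finv
        = (e12A F * tFA F) * tFA ((Coalgebra.comul (R := R)) a)
            * (tFA Finv * e12A Finv) := by noncomm_ring
      _ = (e23A F * tSA F) * tSA ((Coalgebra.comul (R := R)) a)
            * (tSA Finv * e23A Finv) := by rw [hL, hca, hX]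
      _ = e23A F * (tSA F * tSA ((Coalgebra.comul (R := R)) a) * tSA Finv) * e23A Finv := by
          noncomm_ring
  · -- left counit law
    apply LinearMap.ext; intro a
    show LinearMap.rTensor A (Coalgebra.counit (R := R)) (twistMap F Finv D a)
      = TensorProduct.mk R R A 1 a
    rw [twistMap_apply, cFA_eq, map_mul, map_mul, hcFA_F, hcFA_Finv, one_mul, mul_one,
      ← cFA_eq, hD]
    exact LinearMap.congr_fun (Coalgebra.rTensor_counit_comp_comul (R := R) (A := A)) a
  · -- right counit law
    apply LinearMap.ext; intro a
    show LinearMap.lTensor A (Coalgebra.counit (R := R)) (twistMap F Finv D a)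
      = (TensorProduct.mk R A R).flip 1 a
    rw [twistMap_apply, cSA_eq, map_mul, map_mul, hcSA_F, hcSA_Finv, one_mul, mul_one,
      ← cSA_eq, hD]
    exact LinearMap.congr_fun (Coalgebra.lTensor_counit_comp_comul (R := R) (A := A)) a
  · -- comul_one
    show F * D 1 * Finv = 1
    rw [hD, Bialgebra.comul_one, mul_one, h1]
  · -- comul_mul
    ext a b
    show twistMap F Finv D (a * b) = twistMap F Finv D a * twistMap F Finv D b
    rw [twistMap_apply, twistMap_apply, twistMap_apply, hD, Bialgebra.comul_mul]
    calc F * ((Coalgebra.comul (R := R)) a * (Coalgebra.comul (R := R)) b) * Finv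
        = F * (Coalgebra.comul (R := R)) a * (Finv * F) * ((Coalgebra.comul (R := R)) b * Finv)
          := by rw [h2]; noncomm_ring
      _ = F * (Coalgebra.comul (R := R)) a * Finv * (F * (Coalgebra.comul (R := R)) b * Finv)
          := by noncomm_ring
end
end

section
/- Let R be a commutative ring, A a Hopf algebra over R with antipode S, and let F be a Drinfeld twist for A. Write F = Σᵢ fᵢ⁽¹⁾ ⊗ fᵢ⁽²⁾ and F⁻¹ = Σⱼ gⱼ⁽¹⁾ ⊗ gⱼ⁽²⁾. Then the element v = Σᵢ fᵢ⁽¹⁾ · S(fᵢ⁽²⁾) of A is invertible, with inverse w = Σⱼ S(gⱼ⁽¹⁾) · gⱼ⁽²⁾; that is, v·w = 1 and w·v = 1. -/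
open TensorProduct

noncomputable section

variable {R A : Type*} [CommRing R] [Ring A] [Algebra R A]

section DrinfeldAux

set_option synthInstance.maxHeartbeats 400000
set_option maxHeartbeats 1000000

variable {R A : Type*} [CommRing R] [Ring A] [HopfAlgebra R A]

local notation "σ" => HopfAlgebra.antipode (R := R) (A := A)
local notation "Δc" => Coalgebra.comul (R := R) (A := A)
local notation "εc" => Coalgebra.counit (R := R) (A := A)
local notation "μm" => LinearMap.mul' R A

lemma mSr_comul (x : A) : μm (TensorProduct.map σ LinearMap.id (Δc x)) = algebraMap R A (εc x) :=
  HopfAlgebra.mul_antipode_rTensor_comul_apply x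

lemma mSl_comul (x : A) : μm (TensorProduct.map LinearMap.id σ (Δc x)) = algebraMap R A (εc x) :=
  HopfAlgebra.mul_antipode_lTensor_comul_apply x

lemma counitSnd_comul (a : A) : counitSnd (R := R) εc (Δc a) = a := by
  have h : TensorProduct.map (LinearMap.id : A →ₗ[R] A) εc = LinearMap.lTensor A εc := rfl
  simp [counitSnd, h]

lemma counitFst_comul (a : A) : counitFst (R := R) εc (Δc a) = a := by
  have h : TensorProduct.map εc (LinearMap.id : A →ₗ[R] A) = LinearMap.rTensor A εc := rfl
  simp [counitFst, h]

theorem my_antipode_one : σ 1 = 1 := by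
  have h := HopfAlgebra.mul_antipode_rTensor_comul_apply (R := R) (A := A) 1
  simp [Bialgebra.comul_one, Algebra.TensorProduct.one_def] at h
  simpa using h

/-- `(x₂ ⊗ x₃) ⊗ (y₂ ⊗ y₃) ↦ (x₂ * y₂) * (σ y₃ * σ x₃)` -/
def kbig : (A ⊗[R] A) ⊗[R] (A ⊗[R] A) →ₗ[R] A :=
  μm ∘ₗ TensorProduct.map μm (μm ∘ₗ TensorProduct.map σ σ ∘ₗ (TensorProduct.comm R A A).toLinearMap)
    ∘ₗ (tensorTensorTensorComm R A A A A).toLinearMap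

@[simp] lemma kbig_tmul (x₂ x₃ y₂ y₃ : A) :
    (kbig (R := R) (A := A)) ((x₂ ⊗ₜ x₃) ⊗ₜ (y₂ ⊗ₜ y₃)) = (x₂ * y₂) * (σ y₃ * σ x₃) := by
  simp [kbig]

/-- `(x₁ ⊗ (x₂ ⊗ x₃)) ⊗ (y₁ ⊗ (y₂ ⊗ y₃)) ↦ σ(x₁y₁) * ((x₂y₂) * (σ y₃ * σ x₃))` -/
def big : (A ⊗[R] (A ⊗[R] A)) ⊗[R] (A ⊗[R] (A ⊗[R] A)) →ₗ[R] A :=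
  μm ∘ₗ TensorProduct.map (σ ∘ₗ μm) kbig
    ∘ₗ (tensorTensorTensorComm R A (A ⊗[R] A) A (A ⊗[R] A)).toLinearMap

lemma big_tmul (x₁ y₁ : A) (p q : A ⊗[R] A) :
    (big (R := R) (A := A)) ((x₁ ⊗ₜ p) ⊗ₜ (y₁ ⊗ₜ q)) = σ (x₁ * y₁) * kbig (p ⊗ₜ q) := by
  have h : (tensorTensorTensorComm R A (A ⊗[R] A) A (A ⊗[R] A)).toLinearMap
        ((x₁ ⊗ₜ p) ⊗ₜ (y₁ ⊗ₜ q)) = (x₁ ⊗ₜ y₁) ⊗ₜ (p ⊗ₜ q) := by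
    induction p using TensorProduct.induction_on with
    | zero => rw [tmul_zero, zero_tmul, LinearMap.map_zero, zero_tmul, tmul_zero]
    | tmul a b =>
      induction q using TensorProduct.induction_on with
      | zero => rw [tmul_zero, tmul_zero, LinearMap.map_zero, tmul_zero, tmul_zero]
      | tmul c d =>
        simp only [LinearEquiv.coe_coe, tensorTensorTensorComm_tmul]
      | add q₁ q₂ h₁ h₂ =>
        rw [tmul_add y₁, tmul_add, LinearMap.map_add, h₁, h₂, tmul_add, tmul_add]
    | add p₁ p₂ h₁ h₂ =>
      rw [tmul_add x₁, add_tmul, LinearMap.map_add, h₁, h₂, add_tmul, tmul_add]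
  simp only [big, LinearMap.comp_apply, h, TensorProduct.map_tmul, LinearMap.mul'_apply]

lemma kbig_tmul_right (x x' : A) (q : A ⊗[R] A) :
    (kbig (R := R) (A := A)) ((x ⊗ₜ x') ⊗ₜ q)
      = x * (μm (TensorProduct.map LinearMap.id σ q) * σ x') := by
  induction q using TensorProduct.induction_on with
  | zero => simp
  | tmul y y' => simp [mul_assoc]
  | add q₁ q₂ h₁ h₂ => simp only [tmul_add, map_add, h₁, h₂, add_mul, mul_add]

lemma kbig_p_comul (p : A ⊗[R] A) (y : A) :
    (kbig (R := R) (A := A)) (p ⊗ₜ Δc y)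
      = εc y • μm (TensorProduct.map LinearMap.id σ p) := by
  induction p using TensorProduct.induction_on with
  | zero => simp
  | tmul x x' =>
    rw [kbig_tmul_right, mSl_comul, ← Algebra.smul_def, mul_smul_comm]
    simp
  | add p₁ p₂ h₁ h₂ => simp only [add_tmul, map_add, h₁, h₂, smul_add]

lemma big_LL (u v : A ⊗[R] A) :
    (big (R := R) (A := A)) ((LinearMap.lTensor A Δc) u ⊗ₜ (LinearMap.lTensor A Δc) v)
      = σ (counitSnd εc u * counitSnd εc v) := by
  induction u using TensorProduct.induction_on with
  | zero => simp
  | tmul x₁ x₂ =>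
    induction v using TensorProduct.induction_on with
    | zero => simp
    | tmul y₁ y₂ =>
      rw [LinearMap.lTensor_tmul, LinearMap.lTensor_tmul, big_tmul, kbig_p_comul, mSl_comul]
      have h1 : counitSnd (R := R) εc (x₁ ⊗ₜ x₂) = εc x₂ • x₁ := by simp [counitSnd]
      have h2 : counitSnd (R := R) εc (y₁ ⊗ₜ y₂) = εc y₂ • y₁ := by simp [counitSnd]
      rw [h1, h2, smul_mul_smul_comm, map_smul, mul_smul_comm, ← Algebra.commutes,
        ← Algebra.smul_def, smul_smul, mul_comm (εc y₂)]
    | add v₁ v₂ h₁ h₂ => simp only [map_add, tmul_add, h₁, h₂, mul_add, map_add]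
  | add u₁ u₂ h₁ h₂ => simp only [map_add, add_tmul, h₁, h₂, add_mul, map_add]

lemma big_assoc_rT (x₂ y₂ : A) (p q : A ⊗[R] A) :
    (big (R := R) (A := A)) ((TensorProduct.assoc R A A A (p ⊗ₜ x₂)) ⊗ₜ
        (TensorProduct.assoc R A A A (q ⊗ₜ y₂)))
      = μm (TensorProduct.map σ LinearMap.id (p * q)) * (σ y₂ * σ x₂) := by
  induction p using TensorProduct.induction_on with
  | zero => simp
  | tmul x x' =>
    induction q using TensorProduct.induction_on with
    | zero => simp
    | tmul y y' =>
      rw [assoc_tmul, assoc_tmul, big_tmul, kbig_tmul, Algebra.TensorProduct.tmul_mul_tmul]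
      simp [mul_assoc]
    | add q₁ q₂ h₁ h₂ =>
      simp only [add_tmul, map_add, tmul_add, mul_add, add_mul, h₁, h₂]
  | add p₁ p₂ h₁ h₂ =>
    simp only [add_tmul, map_add, tmul_add, mul_add, add_mul, h₁, h₂]

lemma big_RR (u v : A ⊗[R] A) :
    (big (R := R) (A := A)) ((TensorProduct.assoc R A A A) ((LinearMap.rTensor A Δc) u) ⊗ₜ
        (TensorProduct.assoc R A A A) ((LinearMap.rTensor A Δc) v))
      = σ (counitFst εc v) * σ (counitFst εc u) := by
  induction u using TensorProduct.induction_on with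
  | zero => simp
  | tmul x₁ x₂ =>
    induction v using TensorProduct.induction_on with
    | zero => simp
    | tmul y₁ y₂ =>
      rw [LinearMap.rTensor_tmul, LinearMap.rTensor_tmul, big_assoc_rT,
        ← Bialgebra.comul_mul, mSr_comul, Bialgebra.counit_mul]
      have h1 : counitFst (R := R) εc (x₁ ⊗ₜ x₂) = εc x₁ • x₂ := by simp [counitFst]
      have h2 : counitFst (R := R) εc (y₁ ⊗ₜ y₂) = εc y₁ • y₂ := by simp [counitFst]
      rw [h1, h2, map_smul, map_smul, smul_mul_smul_comm, ← Algebra.smul_def,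
        mul_comm (εc x₁)]
    | add v₁ v₂ h₁ h₂ => simp only [map_add, tmul_add, h₁, h₂, mul_add, add_mul]
  | add u₁ u₂ h₁ h₂ => simp only [map_add, add_tmul, h₁, h₂, mul_add, add_mul]

theorem my_antipode_mul (a b : A) : σ (a * b) = σ b * σ a := by
  have h1 := big_LL (R := R) (A := A) (Δc a) (Δc b)
  have h2 := big_RR (R := R) (A := A) (Δc a) (Δc b)
  rw [counitSnd_comul, counitSnd_comul] at h1
  rw [counitFst_comul, counitFst_comul] at h2
  rw [show (LinearMap.lTensor A Δc) (Δc a)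
        = (TensorProduct.assoc R A A A) ((LinearMap.rTensor A Δc) (Δc a)) from
      (Coalgebra.coassoc_apply a).symm,
    show (LinearMap.lTensor A Δc) (Δc b)
        = (TensorProduct.assoc R A A A) ((LinearMap.rTensor A Δc) (Δc b)) from
      (Coalgebra.coassoc_apply b).symm, h2] at h1
  exact h1.symm

/-! ### Multiplicativity of the structural maps -/

lemma emb12_eq : (emb12 : A ⊗[R] A →ₗ[R] A ⊗[R] (A ⊗[R] A))
    = (Algebra.TensorProduct.map (AlgHom.id R A)
        (Algebra.TensorProduct.includeLeft : A →ₐ[R] A ⊗[R] A)).toLinearMap := by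
  apply TensorProduct.ext'
  intro a b
  simp [emb12]

lemma emb12_mul (x y : A ⊗[R] A) : emb12 (x * y) = emb12 x * emb12 y := by
  rw [emb12_eq]; simp only [AlgHom.toLinearMap_apply]; exact map_mul _ x y

lemma emb12_one : emb12 (1 : A ⊗[R] A) = (1 : A ⊗[R] (A ⊗[R] A)) := by
  rw [emb12_eq]; simp only [AlgHom.toLinearMap_apply]; exact map_one _

lemma emb23_apply (x : A ⊗[R] A) : emb23 x = (1 : A) ⊗ₜ x := rfl

lemma emb23_mul (x y : A ⊗[R] A) : emb23 (x * y) = emb23 x * emb23 y := by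
  rw [emb23_apply, emb23_apply, emb23_apply, Algebra.TensorProduct.tmul_mul_tmul, one_mul]

lemma emb23_one : emb23 (1 : A ⊗[R] A) = (1 : A ⊗[R] (A ⊗[R] A)) := by
  rw [emb23_apply]
  exact (Algebra.TensorProduct.one_def).symm

lemma tensorFst_eq : (tensorFst Δc : A ⊗[R] A →ₗ[R] A ⊗[R] (A ⊗[R] A))
    = ((Algebra.TensorProduct.assoc R R R A A A).toAlgHom.comp
        (Algebra.TensorProduct.map (Bialgebra.comulAlgHom R A) (AlgHom.id R A))).toLinearMap := by
  apply TensorProduct.ext'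
  intro a b
  simp only [tensorFst, LinearMap.comp_apply, TensorProduct.map_tmul, LinearMap.id_coe, id_eq,
    AlgHom.toLinearMap_apply, AlgHom.coe_comp, Function.comp_apply,
    Algebra.TensorProduct.map_tmul, AlgHom.coe_id, Bialgebra.comulAlgHom_apply]
  rfl

lemma tensorFst_mul (x y : A ⊗[R] A) :
    tensorFst Δc (x * y) = tensorFst Δc x * tensorFst Δc y := by
  rw [tensorFst_eq]; simp only [AlgHom.toLinearMap_apply]; exact map_mul _ x y

lemma tensorFst_one : tensorFst Δc (1 : A ⊗[R] A) = 1 := by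
  rw [tensorFst_eq]; simp only [AlgHom.toLinearMap_apply]; exact map_one _

lemma tensorSnd_eq : (tensorSnd Δc : A ⊗[R] A →ₗ[R] A ⊗[R] (A ⊗[R] A))
    = (Algebra.TensorProduct.map (AlgHom.id R A) (Bialgebra.comulAlgHom R A)).toLinearMap := by
  apply TensorProduct.ext'
  intro a b
  simp [tensorSnd]

lemma tensorSnd_mul (x y : A ⊗[R] A) :
    tensorSnd Δc (x * y) = tensorSnd Δc x * tensorSnd Δc y := by
  rw [tensorSnd_eq]; simp only [AlgHom.toLinearMap_apply]; exact map_mul _ x y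

lemma tensorSnd_one : tensorSnd Δc (1 : A ⊗[R] A) = 1 := by
  rw [tensorSnd_eq]; simp only [AlgHom.toLinearMap_apply]; exact map_one _

lemma counitFst_eq : (counitFst εc : A ⊗[R] A →ₗ[R] A)
    = ((Algebra.TensorProduct.lid R A).toAlgHom.comp
        (Algebra.TensorProduct.map (Bialgebra.counitAlgHom R A) (AlgHom.id R A))).toLinearMap := by
  apply TensorProduct.ext'
  intro a b
  simp [counitFst]

lemma counitFst_mul (x y : A ⊗[R] A) :
    counitFst εc (x * y) = counitFst εc x * counitFst εc y := by
  rw [counitFst_eq]; simp only [AlgHom.toLinearMap_apply]; exact map_mul _ x y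

lemma counitFst_one : counitFst εc (1 : A ⊗[R] A) = 1 := by
  rw [counitFst_eq]; simp only [AlgHom.toLinearMap_apply]; exact map_one _

lemma counitSnd_eq : (counitSnd εc : A ⊗[R] A →ₗ[R] A)
    = ((Algebra.TensorProduct.rid R R A).toAlgHom.comp
        (Algebra.TensorProduct.map (AlgHom.id R A) (Bialgebra.counitAlgHom R A))).toLinearMap := by
  apply TensorProduct.ext'
  intro a b
  simp [counitSnd]

lemma counitSnd_mul (x y : A ⊗[R] A) :
    counitSnd εc (x * y) = counitSnd εc x * counitSnd εc y := by
  rw [counitSnd_eq]; simp only [AlgHom.toLinearMap_apply]; exact map_mul _ x y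

lemma counitSnd_one : counitSnd εc (1 : A ⊗[R] A) = 1 := by
  rw [counitSnd_eq]; simp only [AlgHom.toLinearMap_apply]; exact map_one _


lemma alg_juggle (r s : R) (a d : A) :
    a * (algebraMap R A r * (algebraMap R A s * d)) = (s * r) • (a * d) := by
  rw [mul_comm s r, ← Algebra.smul_def, ← Algebra.smul_def, mul_smul_comm, mul_smul_comm,
    smul_smul]

/-! ### The maps `x ⊗ (y ⊗ z) ↦ x σ(y) z` and `x ⊗ (y ⊗ z) ↦ σ(x) y σ(z)` -/

/-- `x ⊗ (y ⊗ z) ↦ x * (σ y * z)` -/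
def TT : A ⊗[R] (A ⊗[R] A) →ₗ[R] A :=
  μm ∘ₗ TensorProduct.map LinearMap.id (μm ∘ₗ TensorProduct.map σ LinearMap.id)

@[simp] lemma TT_tmul (x y z : A) :
    (TT (R := R) (A := A)) (x ⊗ₜ (y ⊗ₜ z)) = x * (σ y * z) := by
  simp [TT]

/-- `x ⊗ (y ⊗ z) ↦ σ x * (y * σ z)` -/
def TT' : A ⊗[R] (A ⊗[R] A) →ₗ[R] A :=
  μm ∘ₗ TensorProduct.map σ (μm ∘ₗ TensorProduct.map LinearMap.id σ)

@[simp] lemma TT'_tmul (x y z : A) :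
    (TT' (R := R) (A := A)) (x ⊗ₜ (y ⊗ₜ z)) = σ x * (y * σ z) := by
  simp [TT']

lemma keyT (a d : A) (u v : A ⊗[R] A) :
    (TT (R := R) (A := A)) ((a ⊗ₜ u) * (TensorProduct.assoc R A A A (v ⊗ₜ d)))
      = a * (μm (TensorProduct.map LinearMap.id σ v)
          * (μm (TensorProduct.map σ LinearMap.id u) * d)) := by
  induction u using TensorProduct.induction_on with
  | zero => simp
  | tmul b₁ b₂ =>
    induction v using TensorProduct.induction_on with
    | zero => simp
    | tmul c₁ c₂ =>
      rw [assoc_tmul, Algebra.TensorProduct.tmul_mul_tmul,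
        Algebra.TensorProduct.tmul_mul_tmul, TT_tmul, my_antipode_mul]
      simp [mul_assoc]
    | add v₁ v₂ h₁ h₂ =>
      simp only [add_tmul, map_add, tmul_add, mul_add, add_mul, h₁, h₂]
  | add u₁ u₂ h₁ h₂ =>
    simp only [add_tmul, map_add, tmul_add, mul_add, add_mul, h₁, h₂]

lemma keyT' (c b : A) (u v : A ⊗[R] A) :
    (TT' (R := R) (A := A)) ((TensorProduct.assoc R A A A (u ⊗ₜ b)) * (c ⊗ₜ v))
      = σ c * (μm (TensorProduct.map σ LinearMap.id u)
          * (μm (TensorProduct.map LinearMap.id σ v) * σ b)) := by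
  induction u using TensorProduct.induction_on with
  | zero => simp
  | tmul a₁ a₂ =>
    induction v using TensorProduct.induction_on with
    | zero => simp
    | tmul d₁ d₂ =>
      rw [assoc_tmul, Algebra.TensorProduct.tmul_mul_tmul,
        Algebra.TensorProduct.tmul_mul_tmul, TT'_tmul, my_antipode_mul, my_antipode_mul]
      simp [mul_assoc]
    | add v₁ v₂ h₁ h₂ =>
      simp only [add_tmul, map_add, tmul_add, mul_add, add_mul, h₁, h₂]
  | add u₁ u₂ h₁ h₂ =>
    simp only [add_tmul, map_add, tmul_add, mul_add, add_mul, h₁, h₂]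

lemma TT_snd_fst (x y : A ⊗[R] A) :
    (TT (R := R) (A := A)) (tensorSnd Δc x * tensorFst Δc y)
      = counitSnd εc x * counitFst εc y := by
  induction x using TensorProduct.induction_on with
  | zero => simp
  | tmul a b =>
    induction y using TensorProduct.induction_on with
    | zero => simp
    | tmul c d =>
      have hx : tensorSnd (R := R) Δc (a ⊗ₜ b) = a ⊗ₜ Δc b := by simp [tensorSnd]
      have hy : tensorFst (R := R) Δc (c ⊗ₜ d)
          = TensorProduct.assoc R A A A (Δc c ⊗ₜ d) := by simp [tensorFst]
      rw [hx, hy, keyT, mSl_comul, mSr_comul]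
      have h1 : counitSnd (R := R) εc (a ⊗ₜ b) = εc b • a := by simp [counitSnd]
      have h2 : counitFst (R := R) εc (c ⊗ₜ d) = εc c • d := by simp [counitFst]
      rw [h1, h2, smul_mul_smul_comm, alg_juggle]
    | add y₁ y₂ h₁ h₂ => simp only [map_add, mul_add, add_mul, h₁, h₂]
  | add x₁ x₂ h₁ h₂ => simp only [map_add, mul_add, add_mul, h₁, h₂]

lemma TT'_fst_snd (x y : A ⊗[R] A) :
    (TT' (R := R) (A := A)) (tensorFst Δc x * tensorSnd Δc y)
      = σ (counitSnd εc y) * σ (counitFst εc x) := by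
  induction x using TensorProduct.induction_on with
  | zero => simp
  | tmul a b =>
    induction y using TensorProduct.induction_on with
    | zero => simp
    | tmul c d =>
      have hx : tensorFst (R := R) Δc (a ⊗ₜ b)
          = TensorProduct.assoc R A A A (Δc a ⊗ₜ b) := by simp [tensorFst]
      have hy : tensorSnd (R := R) Δc (c ⊗ₜ d) = c ⊗ₜ Δc d := by simp [tensorSnd]
      rw [hx, hy, keyT', mSl_comul, mSr_comul]
      have h1 : counitSnd (R := R) εc (c ⊗ₜ d) = εc d • c := by simp [counitSnd]
      have h2 : counitFst (R := R) εc (a ⊗ₜ b) = εc a • b := by simp [counitFst]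
      rw [h1, h2, map_smul, map_smul, smul_mul_smul_comm, alg_juggle]
    | add y₁ y₂ h₁ h₂ => simp only [map_add, mul_add, add_mul, h₁, h₂]
  | add x₁ x₂ h₁ h₂ => simp only [map_add, mul_add, add_mul, h₁, h₂]

lemma TT_emb (x y : A ⊗[R] A) :
    (TT (R := R) (A := A)) (emb23 y * emb12 x)
      = μm (TensorProduct.map LinearMap.id σ x) * μm (TensorProduct.map σ LinearMap.id y) := by
  induction x using TensorProduct.induction_on with
  | zero => simp
  | tmul a b =>
    induction y using TensorProduct.induction_on with
    | zero => simp
    | tmul c d =>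
      have hx : emb12 (R := R) (A := A) (a ⊗ₜ b) = a ⊗ₜ (b ⊗ₜ (1 : A)) := by simp [emb12]
      rw [emb23_apply, hx, Algebra.TensorProduct.tmul_mul_tmul,
        Algebra.TensorProduct.tmul_mul_tmul, one_mul, mul_one, TT_tmul, my_antipode_mul]
      simp [mul_assoc]
    | add y₁ y₂ h₁ h₂ => simp only [map_add, mul_add, add_mul, h₁, h₂]
  | add x₁ x₂ h₁ h₂ => simp only [map_add, mul_add, add_mul, h₁, h₂]

lemma TT'_emb (x y : A ⊗[R] A) :
    (TT' (R := R) (A := A)) (emb12 y * emb23 x)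
      = μm (TensorProduct.map σ LinearMap.id y) * μm (TensorProduct.map LinearMap.id σ x) := by
  induction x using TensorProduct.induction_on with
  | zero => simp
  | tmul a b =>
    induction y using TensorProduct.induction_on with
    | zero => simp
    | tmul c d =>
      have hy : emb12 (R := R) (A := A) (c ⊗ₜ d) = c ⊗ₜ (d ⊗ₜ (1 : A)) := by simp [emb12]
      rw [emb23_apply, hy, Algebra.TensorProduct.tmul_mul_tmul,
        Algebra.TensorProduct.tmul_mul_tmul, one_mul, mul_one, TT'_tmul]
      simp [mul_assoc]
    | add y₁ y₂ h₁ h₂ => simp only [map_add, mul_add, add_mul, h₁, h₂]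
  | add x₁ x₂ h₁ h₂ => simp only [map_add, mul_add, add_mul, h₁, h₂]

end DrinfeldAux

/-- for a Hopf algebra `A` with antipode `S` and a Drinfeld twist `F` with
inverse `F⁻¹`, the element `v = Σ f⁽¹⁾ · S(f⁽²⁾)` (the image of `F` under `μ ∘ (id ⊗ S)`)
is invertible with inverse `w = Σ S(g⁽¹⁾) · g⁽²⁾` (the image of `F⁻¹` under `μ ∘ (S ⊗ id)`):
`v·w = 1` and `w·v = 1`. -/
theorem twist_v_invertible {R A : Type*} [CommRing R] [Ring A] [HopfAlgebra R A]
    (F Finv : A ⊗[R] A)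
    (hF : IsDrinfeldTwist (Coalgebra.comul (R := R) (A := A)) (Coalgebra.counit (R := R) (A := A))
      F Finv) :
    LinearMap.mul' R A
        (TensorProduct.map LinearMap.id (HopfAlgebra.antipode (R := R) (A := A)) F) *
      LinearMap.mul' R A
        (TensorProduct.map (HopfAlgebra.antipode (R := R) (A := A)) LinearMap.id Finv) = 1 ∧
    LinearMap.mul' R A
        (TensorProduct.map (HopfAlgebra.antipode (R := R) (A := A)) LinearMap.id Finv) *
      LinearMap.mul' R A
        (TensorProduct.map LinearMap.id (HopfAlgebra.antipode (R := R) (A := A)) F) = 1 := by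
  classical
  obtain ⟨hFF, hFF', hcoc, he1, he2⟩ := hF
  have hTF1 : tensorFst (Coalgebra.comul (R := R) (A := A)) F
      * tensorFst (Coalgebra.comul (R := R) (A := A)) Finv = 1 := by
    rw [← tensorFst_mul, hFF, tensorFst_one]
  have hTS1 : tensorSnd (Coalgebra.comul (R := R) (A := A)) F
      * tensorSnd (Coalgebra.comul (R := R) (A := A)) Finv = 1 := by
    rw [← tensorSnd_mul, hFF, tensorSnd_one]
  have hE23 : emb23 (R := R) (A := A) Finv * emb23 F = 1 := by
    rw [← emb23_mul, hFF', emb23_one]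
  have hE12 : emb12 (R := R) (A := A) Finv * emb12 F = 1 := by
    rw [← emb12_mul, hFF', emb12_one]
  have hCF : counitFst (Coalgebra.counit (R := R) (A := A)) Finv = 1 := by
    have h : (1 : A) = counitFst (Coalgebra.counit (R := R) (A := A)) F
        * counitFst (Coalgebra.counit (R := R) (A := A)) Finv := by
      rw [← counitFst_mul, hFF, counitFst_one]
    rw [he1, one_mul] at h
    exact h.symm
  have hCS : counitSnd (Coalgebra.counit (R := R) (A := A)) Finv = 1 := by
    have h : (1 : A) = counitSnd (Coalgebra.counit (R := R) (A := A)) F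
        * counitSnd (Coalgebra.counit (R := R) (A := A)) Finv := by
      rw [← counitSnd_mul, hFF, counitSnd_one]
    rw [he2, one_mul] at h
    exact h.symm
  have hA : emb23 (R := R) (A := A) Finv * emb12 F
      = tensorSnd (Coalgebra.comul (R := R) (A := A)) F
        * tensorFst (Coalgebra.comul (R := R) (A := A)) Finv := by
    calc emb23 (R := R) (A := A) Finv * emb12 F
        = emb23 (R := R) (A := A) Finv * emb12 F
            * (tensorFst (Coalgebra.comul (R := R) (A := A)) F
              * tensorFst (Coalgebra.comul (R := R) (A := A)) Finv) := by
          rw [hTF1, mul_one]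
      _ = emb23 (R := R) (A := A) Finv
            * (emb12 F * tensorFst (Coalgebra.comul (R := R) (A := A)) F)
            * tensorFst (Coalgebra.comul (R := R) (A := A)) Finv := by
          simp only [mul_assoc]
      _ = emb23 (R := R) (A := A) Finv
            * (emb23 F * tensorSnd (Coalgebra.comul (R := R) (A := A)) F)
            * tensorFst (Coalgebra.comul (R := R) (A := A)) Finv := by rw [hcoc]
      _ = (emb23 (R := R) (A := A) Finv * emb23 F)
            * (tensorSnd (Coalgebra.comul (R := R) (A := A)) F
              * tensorFst (Coalgebra.comul (R := R) (A := A)) Finv) := by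
          simp only [mul_assoc]
      _ = tensorSnd (Coalgebra.comul (R := R) (A := A)) F
            * tensorFst (Coalgebra.comul (R := R) (A := A)) Finv := by
          rw [hE23, one_mul]
  have hB : emb12 (R := R) (A := A) Finv * emb23 F
      = tensorFst (Coalgebra.comul (R := R) (A := A)) F
        * tensorSnd (Coalgebra.comul (R := R) (A := A)) Finv := by
    calc emb12 (R := R) (A := A) Finv * emb23 F
        = emb12 (R := R) (A := A) Finv * emb23 F
            * (tensorSnd (Coalgebra.comul (R := R) (A := A)) F
              * tensorSnd (Coalgebra.comul (R := R) (A := A)) Finv) := by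
          rw [hTS1, mul_one]
      _ = emb12 (R := R) (A := A) Finv
            * (emb23 F * tensorSnd (Coalgebra.comul (R := R) (A := A)) F)
            * tensorSnd (Coalgebra.comul (R := R) (A := A)) Finv := by
          simp only [mul_assoc]
      _ = emb12 (R := R) (A := A) Finv
            * (emb12 F * tensorFst (Coalgebra.comul (R := R) (A := A)) F)
            * tensorSnd (Coalgebra.comul (R := R) (A := A)) Finv := by rw [← hcoc]
      _ = (emb12 (R := R) (A := A) Finv * emb12 F)
            * (tensorFst (Coalgebra.comul (R := R) (A := A)) F
              * tensorSnd (Coalgebra.comul (R := R) (A := A)) Finv) := by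
          simp only [mul_assoc]
      _ = tensorFst (Coalgebra.comul (R := R) (A := A)) F
            * tensorSnd (Coalgebra.comul (R := R) (A := A)) Finv := by
          rw [hE12, one_mul]
  constructor
  · calc LinearMap.mul' R A
          (TensorProduct.map LinearMap.id (HopfAlgebra.antipode (R := R) (A := A)) F)
        * LinearMap.mul' R A
          (TensorProduct.map (HopfAlgebra.antipode (R := R) (A := A)) LinearMap.id Finv)
        = TT (emb23 (R := R) (A := A) Finv * emb12 F) := (TT_emb F Finv).symm
      _ = TT (tensorSnd (Coalgebra.comul (R := R) (A := A)) F
            * tensorFst (Coalgebra.comul (R := R) (A := A)) Finv) := by rw [hA]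
      _ = counitSnd (Coalgebra.counit (R := R) (A := A)) F
            * counitFst (Coalgebra.counit (R := R) (A := A)) Finv := TT_snd_fst F Finv
      _ = 1 := by rw [he2, hCF, mul_one]
  · calc LinearMap.mul' R A
          (TensorProduct.map (HopfAlgebra.antipode (R := R) (A := A)) LinearMap.id Finv)
        * LinearMap.mul' R A
          (TensorProduct.map LinearMap.id (HopfAlgebra.antipode (R := R) (A := A)) F)
        = TT' (emb12 (R := R) (A := A) Finv * emb23 F) := (TT'_emb F Finv).symm
      _ = TT' (tensorFst (Coalgebra.comul (R := R) (A := A)) F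
            * tensorSnd (Coalgebra.comul (R := R) (A := A)) Finv) := by rw [hB]
      _ = HopfAlgebra.antipode (R := R) (A := A)
              (counitSnd (Coalgebra.counit (R := R) (A := A)) Finv)
            * HopfAlgebra.antipode (R := R) (A := A)
              (counitFst (Coalgebra.counit (R := R) (A := A)) F) := TT'_fst_snd F Finv
      _ = 1 := by rw [hCS, he1, my_antipode_one, mul_one]
end
end
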